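/- For all indices μ > -1/2 and all 0 < x < y, the ratio of modified Bessel functions satisfies the lower bound I_μ(y)/I_μ(x) > (x/y)^(μ+3) · e^(y−x). -/

import Mathlib

open Real

/-- Modified Bessel function of the first kind. -/
noncomputable def besselI (μ z : ℝ) : ℝ :=
  ∑' k : ℕ, (z / 2) ^ (μ + 2 * (k : ℝ)) / ((Nat.factorial k : ℝ) * Real.Gamma ((k : ℝ) + μ + 1))

namespace BesselProofAux

noncomputable def a (μ : ℝ) (k : ℕ) : ℝ :=
  1 / ((Nat.factorial k : ℝ) * Real.Gamma ((k : ℝ) + μ + 1))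

lemma a_pos {μ : ℝ} (hμ : -1 < μ) (k : ℕ) : 0 < a μ k := by
  have hk : (0:ℝ) ≤ (k:ℝ) := Nat.cast_nonneg k
  have h1 : (0:ℝ) < (k:ℝ) + μ + 1 := by linarith
  have hG := Real.Gamma_pos_of_pos h1
  have h2 : (0:ℝ) < (Nat.factorial k : ℝ) := by
    exact_mod_cast Nat.factorial_pos k
  unfold a; positivity

lemma a_succ {μ : ℝ} (hμ : -1 < μ) (k : ℕ) :
    a μ (k + 1) = a μ k / (((k:ℝ) + 1) * ((k:ℝ) + μ + 1)) := by
  have hk : (0:ℝ) ≤ (k:ℝ) := Nat.cast_nonneg k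
  have h1 : (0:ℝ) < (k:ℝ) + μ + 1 := by linarith
  have hG : Real.Gamma (((k:ℝ) + 1) + μ + 1) = ((k:ℝ) + μ + 1) * Real.Gamma ((k:ℝ) + μ + 1) := by
    have h2 : ((k:ℝ) + 1) + μ + 1 = ((k:ℝ) + μ + 1) + 1 := by ring
    rw [h2, Real.Gamma_add_one h1.ne']
  have hGpos := Real.Gamma_pos_of_pos h1
  have hfac : (0:ℝ) < (Nat.factorial k : ℝ) := by exact_mod_cast Nat.factorial_pos k
  unfold a
  rw [Nat.factorial_succ]
  push_cast
  rw [hG]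
  field_simp

lemma summable_master {μ : ℝ} (hμ : -1 < μ) {c : ℝ} (hc : 0 ≤ c) :
    Summable (fun k : ℕ => ((k:ℝ) + 1) * a μ k * c ^ k) := by
  rcases hc.eq_or_lt with h | h
  · apply summable_of_ne_finset_zero (s := {0})
    intro k hk
    have hk0 : k ≠ 0 := by simpa using hk
    simp [← h, zero_pow hk0]
  · obtain ⟨N, hN⟩ := exists_nat_ge (4 * c + 1)
    apply summable_of_ratio_norm_eventually_le (r := 1/2) (by norm_num)
    filter_upwards [Filter.eventually_ge_atTop N] with k hk
    have hkc : 4 * c + 1 ≤ (k:ℝ) := le_trans hN (Nat.cast_le.mpr hk)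
    have hA := a_pos hμ (k+1)
    have hP : (0:ℝ) < c ^ k := pow_pos h k
    have hknn : (0:ℝ) ≤ (k:ℝ) := Nat.cast_nonneg k
    have haj : a μ k = ((k:ℝ)+1) * ((k:ℝ)+μ+1) * a μ (k+1) := by
      have h2 : ((k:ℝ)+1) ≠ 0 := by positivity
      have h3 : ((k:ℝ)+μ+1) ≠ 0 := by
        have : (0:ℝ) < (k:ℝ)+μ+1 := by linarith
        exact this.ne'
      rw [a_succ hμ k]
      field_simp
    have h1 : (0:ℝ) ≤ ((k:ℕ):ℝ) + 1 + 1 := by positivity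
    rw [Real.norm_of_nonneg (by positivity), Real.norm_of_nonneg (by
      have := a_pos hμ k
      positivity)]
    push_cast
    rw [haj, pow_succ]
    nlinarith [mul_pos hA hP, mul_nonneg (mul_nonneg hA.le hP.le) hknn,
      mul_nonneg (mul_nonneg (mul_nonneg hA.le hP.le) hknn) hknn,
      mul_nonneg (mul_nonneg (mul_nonneg (mul_nonneg hA.le hP.le) hknn) hknn) hknn,
      mul_nonneg (mul_nonneg (mul_nonneg hA.le hP.le) hknn) h.le,
      mul_nonneg (mul_nonneg (mul_nonneg (mul_nonneg hA.le hP.le) hknn) hknn) h.le]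

noncomputable def G (μ t : ℝ) : ℝ := ∑' k : ℕ, a μ k * t ^ k
noncomputable def G' (μ t : ℝ) : ℝ := ∑' k : ℕ, a μ k * ((k:ℝ) * t ^ (k - 1))

lemma summable_G {μ : ℝ} (hμ : -1 < μ) {t : ℝ} (ht : 0 ≤ t) :
    Summable (fun k : ℕ => a μ k * t ^ k) := by
  refine Summable.of_nonneg_of_le (fun k => by have := a_pos hμ k; positivity)
    (fun k => ?_) (summable_master hμ ht)
  have h1 : (1:ℝ) ≤ (k:ℝ) + 1 := by
    have : (0:ℝ) ≤ (k:ℝ) := Nat.cast_nonneg k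
    linarith
  have ha := a_pos hμ k
  have h2 : (0:ℝ) ≤ t ^ k := pow_nonneg ht k
  have h3 : (0:ℝ) ≤ (k:ℝ) := Nat.cast_nonneg k
  nlinarith [mul_nonneg (mul_nonneg h3 ha.le) h2]

lemma summable_G' {μ : ℝ} (hμ : -1 < μ) {v : ℝ} (hv : 0 < v) :
    Summable (fun k : ℕ => a μ k * ((k:ℝ) * v ^ (k - 1))) := by
  refine Summable.of_nonneg_of_le (fun k => by
      have h1 := a_pos hμ k
      have h2 : (0:ℝ) ≤ v ^ (k-1) := pow_nonneg hv.le _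
      exact mul_nonneg h1.le (mul_nonneg (Nat.cast_nonneg k) h2))
    (fun k => ?_) ((summable_master hμ hv.le).mul_left (1/v))
  match k with
  | 0 =>
    simp only [Nat.cast_zero, zero_mul, mul_zero, Nat.zero_sub, pow_zero, mul_one, Nat.cast_ofNat]
    have h0 := a_pos hμ 0
    have : (0:ℝ) ≤ 1/v := by positivity
    nlinarith
  | (j+1) =>
    have hA := a_pos hμ (j+1)
    have hP : (0:ℝ) < v ^ j := pow_pos hv j
    have hj : (0:ℝ) ≤ (j:ℝ) := Nat.cast_nonneg j
    have h3 : (1/v) * (((j:ℝ)+1+1) * a μ (j+1) * (v^j*v)) = ((j:ℝ)+2) * a μ (j+1) * v^j := by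
      field_simp
      ring
    simp only [Nat.add_sub_cancel, pow_succ]
    push_cast
    rw [h3]
    nlinarith

lemma G_pos {μ : ℝ} (hμ : -1 < μ) {t : ℝ} (ht : 0 ≤ t) : 0 < G μ t := by
  refine Summable.tsum_pos (summable_G hμ ht) (fun k => by have := a_pos hμ k; positivity) 0 ?_
  simpa using a_pos hμ 0

lemma hasDerivAt_G {μ : ℝ} (hμ : -1 < μ) {t : ℝ} (ht : 0 ≤ t) :
    HasDerivAt (G μ) (G' μ t) t := by
  set R : ℝ := t + 1 with hR
  have hR0 : 0 < R := by simp only [hR]; linarith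
  have hR1 : 1 ≤ R := by simp only [hR]; linarith
  have hu : Summable (fun k : ℕ => ((k:ℝ) + 1) * a μ k * R ^ k) := summable_master hμ hR0.le
  have key := hasDerivAt_tsum_of_isPreconnected hu (isOpen_Ioo (a := -R) (b := R))
      (convex_Ioo _ _).isPreconnected
      (g := fun k x => a μ k * x ^ k) (g' := fun k x => a μ k * ((k:ℝ) * x ^ (k - 1)))
      (fun n y _ => (hasDerivAt_pow n y).const_mul (a μ n))
      (fun n y hy => ?_) (y₀ := 0) ⟨by linarith, by linarith⟩ ?_
      (show t ∈ Set.Ioo (-R) R by constructor <;> simp only [hR] <;> linarith)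
  · exact key
  · have hA := a_pos hμ n
    have hyR : |y| ≤ R := by
      rw [abs_le]; exact ⟨hy.1.le, hy.2.le⟩
    have h1 : |y| ^ (n-1) ≤ R ^ (n-1) := pow_le_pow_left₀ (abs_nonneg y) hyR _
    have h2 : R ^ (n-1) ≤ R ^ n := pow_le_pow_right₀ hR1 (Nat.sub_le n 1)
    have hn : (0:ℝ) ≤ (n:ℝ) := Nat.cast_nonneg n
    rw [Real.norm_eq_abs, abs_mul, abs_mul, abs_of_nonneg hA.le, abs_of_nonneg hn, abs_pow]
    have : (n:ℝ) * |y|^(n-1) ≤ ((n:ℝ)+1) * R^n := by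
      have := pow_nonneg (abs_nonneg y) (n-1)
      nlinarith [pow_pos hR0 n]
    nlinarith
  · apply summable_of_ne_finset_zero (s := {0})
    intro k hk
    have hk0 : k ≠ 0 := by simpa using hk
    simp [zero_pow hk0]

lemma besselI_eq {μ z : ℝ} (hz : 0 < z) :
    besselI μ z = (z/2) ^ μ * G μ (z^2/4) := by
  have hw : 0 < z/2 := by linarith
  unfold besselI G
  rw [← tsum_mul_left]
  apply tsum_congr
  intro k
  have h1 : μ + 2*(k:ℝ) = μ + ((2*k : ℕ):ℝ) := by push_cast; ring
  rw [h1, Real.rpow_add hw, Real.rpow_natCast, pow_mul]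
  have h2 : (z/2)^2 = z^2/4 := by ring
  rw [h2]
  unfold a
  ring

noncomputable def θf (μ : ℝ) (k : ℕ) : ℝ := (k:ℝ) + μ + 3/2
noncomputable def Af (μ w : ℝ) (k : ℕ) : ℝ := θf μ k * a μ k * w^(2*k)
noncomputable def Bf (μ w : ℝ) (k : ℕ) : ℝ := a μ k / θf μ k * w^(2*k+2)
noncomputable def Df (μ w : ℝ) (k : ℕ) : ℝ := if k = 0 then 0 else Bf μ w (k-1)
noncomputable def Ef (μ w : ℝ) (k : ℕ) : ℝ := (2*(k:ℝ) + 2*μ + 3) * (a μ k * w ^ (2*k))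

lemma key {μ w : ℝ} (hμ : -(1/2:ℝ) < μ) (hw : 0 < w) :
    (∑' k : ℕ, 2 * a μ k * w ^ (2*k+1)) <
      ∑' k : ℕ, (2*(k:ℝ) + 2*μ + 3) * (a μ k * w ^ (2*k)) := by
  have hμ' : (-1:ℝ) < μ := by linarith
  have hv : (0:ℝ) < w^2 := by positivity
  have hθ1 : ∀ k : ℕ, (1:ℝ) ≤ θf μ k := fun k => by
    have : (0:ℝ) ≤ (k:ℝ) := Nat.cast_nonneg k
    unfold θf; linarith
  have hθ0 : ∀ k : ℕ, (0:ℝ) < θf μ k := fun k => lt_of_lt_of_le one_pos (hθ1 k)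
  have M := summable_master hμ' hv.le
  have hAnn : ∀ k, 0 ≤ Af μ w k := fun k => by
    have h1 := (a_pos hμ' k).le
    have h2 := (hθ0 k).le
    unfold Af
    positivity
  have hBnn : ∀ k, 0 ≤ Bf μ w k := fun k => by
    have h1 := (a_pos hμ' k).le
    have h2 := hθ0 k
    unfold Bf
    positivity
  have hDnn : ∀ k, 0 ≤ Df μ w k := fun k => by
    unfold Df
    split
    · exact le_refl 0
    · exact hBnn _
  have hA : Summable (Af μ w) := by
    refine Summable.of_nonneg_of_le hAnn (fun k => ?_) (M.mul_left (μ + 3/2))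
    have ha := a_pos hμ' k
    have hk : (0:ℝ) ≤ (k:ℝ) := Nat.cast_nonneg k
    have hp : (0:ℝ) ≤ (w^2)^k := by positivity
    unfold Af θf
    rw [pow_mul]
    nlinarith [mul_nonneg (mul_nonneg hk ha.le) hp]
  have hB : Summable (Bf μ w) := by
    refine Summable.of_nonneg_of_le hBnn (fun k => ?_) (M.mul_left (w^2))
    have ha := a_pos hμ' k
    have hk : (0:ℝ) ≤ (k:ℝ) := Nat.cast_nonneg k
    have hp : (0:ℝ) < (w^2)^k := by positivity
    have h1 : a μ k / θf μ k ≤ a μ k := div_le_self ha.le (hθ1 k)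
    have hpow : w^(2*k+2) = (w^2)^k * w^2 := by rw [pow_add, pow_mul]
    unfold Bf
    rw [hpow]
    have h2 : a μ k / θf μ k * ((w^2)^k * w^2) ≤ a μ k * ((w^2)^k * w^2) :=
      mul_le_mul_of_nonneg_right h1 (by positivity)
    refine h2.trans ?_
    nlinarith [mul_nonneg (mul_nonneg hk ha.le) hp.le]
  have hD : Summable (Df μ w) := by
    apply (summable_nat_add_iff 1).mp
    simpa [Df] using hB
  have hE : Summable (Ef μ w) := by
    refine Summable.of_nonneg_of_le (fun k => by
        have ha := a_pos hμ' k
        have hk : (0:ℝ) ≤ (k:ℝ) := Nat.cast_nonneg k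
        have hp : (0:ℝ) ≤ w^(2*k) := by positivity
        unfold Ef
        nlinarith [mul_nonneg ha.le hp])
      (fun k => ?_) (M.mul_left (2*μ + 3))
    have ha := a_pos hμ' k
    have hk : (0:ℝ) ≤ (k:ℝ) := Nat.cast_nonneg k
    have hp : (0:ℝ) ≤ (w^2)^k := by positivity
    unfold Ef
    rw [pow_mul]
    nlinarith [mul_nonneg (mul_nonneg hk ha.le) hp]
  have hL : Summable (fun k : ℕ => 2 * a μ k * w ^ (2*k+1)) := by
    refine Summable.of_nonneg_of_le (fun k => by
        have := (a_pos hμ' k).le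
        positivity)
      (fun k => ?_) (M.mul_left (2*w))
    have ha := a_pos hμ' k
    have hk : (0:ℝ) ≤ (k:ℝ) := Nat.cast_nonneg k
    have hp : (0:ℝ) ≤ (w^2)^k := by positivity
    have hpow : w^(2*k+1) = (w^2)^k * w := by rw [pow_add, pow_mul, pow_one]
    rw [hpow]
    nlinarith [mul_nonneg (mul_nonneg hk ha.le) hp]
  have step1 : (∑' k : ℕ, 2 * a μ k * w ^ (2*k+1)) ≤ ∑' k, (Af μ w k + Bf μ w k) := by
    refine Summable.tsum_le_tsum (fun k => ?_) hL (hA.add hB)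
    have ha := a_pos hμ' k
    have hθk := hθ0 k
    have hq : (0:ℝ) ≤ a μ k / θf μ k := by positivity
    have hp : (0:ℝ) ≤ w^(2*k) := by positivity
    obtain ⟨q, hq0, hqe⟩ : ∃ q : ℝ, 0 ≤ q ∧ a μ k = q * θf μ k :=
      ⟨a μ k / θf μ k, hq, (div_mul_cancel₀ _ hθk.ne').symm⟩
    unfold Af Bf
    rw [hqe, mul_div_cancel_right₀ q hθk.ne', pow_add, pow_add, pow_one]
    nlinarith [mul_nonneg (mul_nonneg hq0 hp) (sq_nonneg (θf μ k - w))]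
  have step2 : ∑' k, (Af μ w k + Bf μ w k) = (∑' k, Af μ w k) + ∑' k, Bf μ w k :=
    Summable.tsum_add hA hB
  have step3 : (∑' k, Bf μ w k) = ∑' k, Df μ w k := by
    rw [Summable.tsum_eq_zero_add hD]
    simp [Df]
  have step4 : (∑' k, Af μ w k) + (∑' k, Df μ w k) = ∑' k, (Af μ w k + Df μ w k) :=
    (Summable.tsum_add hA hD).symm
  have step5 : (∑' k, (Af μ w k + Df μ w k)) < ∑' k, Ef μ w k := by
    refine Summable.tsum_lt_tsum_of_nonneg (fun k => add_nonneg (hAnn k) (hDnn k)) (fun k => ?_)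
      (i := 0) ?_ hE
    · match k with
      | 0 =>
        have ha := a_pos hμ' 0
        unfold Af Df Ef θf
        norm_num
        nlinarith
      | (j+1) =>
        have ha := a_pos hμ' (j+1)
        have hj : (0:ℝ) ≤ (j:ℝ) := Nat.cast_nonneg j
        have hθj := hθ0 j
        have hajj : a μ j = ((j:ℝ)+1) * ((j:ℝ)+μ+1) * a μ (j+1) := by
          have h2 : ((j:ℝ)+1) ≠ 0 := by positivity
          have h3 : ((j:ℝ)+μ+1) ≠ 0 := by
            have : (0:ℝ) < (j:ℝ)+μ+1 := by linarith
            exact this.ne'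
          rw [a_succ hμ' j]
          field_simp
        have hP : (0:ℝ) ≤ w^(2*j+2) := by positivity
        have hBle : Bf μ w j ≤ ((j:ℝ)+1) * a μ (j+1) * w^(2*j+2) := by
          unfold Bf
          rw [div_mul_eq_mul_div, div_le_iff₀ hθj, hajj]
          unfold θf
          nlinarith [mul_nonneg (mul_nonneg hj ha.le) hP, mul_nonneg ha.le hP]
        have hDv : Df μ w (j+1) = Bf μ w j := by simp [Df]
        have hAv : Af μ w (j+1) = (((j:ℝ)+1) + μ + 3/2) * a μ (j+1) * w^(2*j+2) := by
          unfold Af θf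
          push_cast
          rw [show 2*(j+1) = 2*j+2 by ring]
        have hEv : Ef μ w (j+1) = (2*((j:ℝ)+1) + 2*μ + 3) * (a μ (j+1) * w^(2*j+2)) := by
          unfold Ef
          push_cast
          rw [show 2*(j+1) = 2*j+2 by ring]
        rw [hDv, hAv, hEv]
        nlinarith [hBle, mul_nonneg ha.le hP]
    · have ha := a_pos hμ' 0
      unfold Af Df Ef θf
      norm_num
      nlinarith
  have hfin : (∑' k : ℕ, Ef μ w k) = ∑' k : ℕ, (2*(k:ℝ) + 2*μ + 3) * (a μ k * w ^ (2*k)) := rfl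
  calc (∑' k : ℕ, 2 * a μ k * w ^ (2*k+1)) ≤ ∑' k, (Af μ w k + Bf μ w k) := step1
    _ = (∑' k, Af μ w k) + ∑' k, Bf μ w k := step2
    _ = (∑' k, Af μ w k) + ∑' k, Df μ w k := by rw [step3]
    _ = ∑' k, (Af μ w k + Df μ w k) := step4
    _ < ∑' k, Ef μ w k := step5
    _ = _ := hfin

lemma ineq {μ w : ℝ} (hμ : -(1/2:ℝ) < μ) (hw : 0 < w) :
    2*w * G μ (w^2) < (2*μ+3) * G μ (w^2) + 2*w^2 * G' μ (w^2) := by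
  have hμ' : (-1:ℝ) < μ := by linarith
  have hv : (0:ℝ) < w^2 := by positivity
  have e1 : 2*w * G μ (w^2) = ∑' k : ℕ, 2 * a μ k * w^(2*k+1) := by
    unfold G
    rw [← tsum_mul_left]
    apply tsum_congr; intro k
    rw [← pow_mul, pow_succ]
    ring
  have S1 : Summable (fun k : ℕ => (2*μ+3) * (a μ k * (w^2)^k)) :=
    (summable_G hμ' hv.le).mul_left _
  have S2 : Summable (fun k : ℕ => 2*w^2 * (a μ k * ((k:ℝ) * (w^2)^(k-1)))) :=
    (summable_G' hμ' hv).mul_left _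
  have e2 : (2*μ+3) * G μ (w^2) + 2*w^2 * G' μ (w^2)
      = ∑' k : ℕ, (2*(k:ℝ) + 2*μ + 3) * (a μ k * w^(2*k)) := by
    unfold G G'
    rw [← tsum_mul_left, ← tsum_mul_left, ← Summable.tsum_add S1 S2]
    apply tsum_congr; intro k
    match k with
    | 0 => simp
    | (j+1) =>
      simp only [Nat.add_sub_cancel]
      push_cast
      rw [pow_mul, pow_succ (w^2) j]
      ring
  rw [e1, e2]
  exact key hμ hw

lemma strictMono_H {μ : ℝ} (hμ : -(1/2:ℝ) < μ) :
    StrictMonoOn (fun z : ℝ => z ^ (2*μ+3) * Real.exp (-z) * G μ (z^2/4)) (Set.Ioi 0) := by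
  have hμ' : (-1:ℝ) < μ := by linarith
  have hderiv : ∀ z ∈ Set.Ioi (0:ℝ),
      HasDerivAt (fun z : ℝ => z ^ (2*μ+3) * Real.exp (-z) * G μ (z^2/4))
        (Real.exp (-z) * z^(2*μ+2) *
          ((2*μ+3) * G μ (z^2/4) + 2*(z^2/4) * G' μ (z^2/4) - 2*(z/2) * G μ (z^2/4))) z := by
    intro z hz
    have hz0 : (0:ℝ) < z := hz
    have h1 : HasDerivAt (fun z : ℝ => z ^ (2*μ+3)) ((2*μ+3) * z^(2*μ+2)) z := by
      have h := Real.hasDerivAt_rpow_const (x := z) (p := 2*μ+3) (Or.inl hz0.ne')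
      rw [show 2*μ+3-1 = 2*μ+2 by ring] at h
      exact h
    have h2 : HasDerivAt (fun z : ℝ => Real.exp (-z)) (-Real.exp (-z)) z := by
      have h := (hasDerivAt_neg z).exp
      simpa using h
    have hin : HasDerivAt (fun z : ℝ => z^2/4) (z/2) z := by
      have h := (hasDerivAt_pow 2 z).div_const 4
      convert h using 1
      rfl; rfl
      push_cast; ring
    have hout := hasDerivAt_G hμ' (t := z^2/4) (by positivity)
    have h3 : HasDerivAt (fun z : ℝ => G μ (z^2/4)) (G' μ (z^2/4) * (z/2)) z := by
      exact hout.comp z hin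
    have htot := (h1.mul h2).mul h3
    convert htot using 1
    rfl; rfl; rfl
    simp only [Pi.mul_apply]
    have hzp : z^(2*μ+3) = z^(2*μ+2) * z := by
      rw [show (2*μ+3) = (2*μ+2)+1 by ring, Real.rpow_add hz0, Real.rpow_one]
    rw [hzp]; ring
  apply strictMonoOn_of_deriv_pos (convex_Ioi 0)
  · intro z hz
    exact (hderiv z hz).continuousAt.continuousWithinAt
  · intro z hz
    rw [interior_Ioi] at hz
    rw [(hderiv z hz).deriv]
    have hz0 : (0:ℝ) < z := hz
    have hw : 0 < z/2 := by linarith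
    have hiq := ineq hμ hw
    rw [show (z/2)^2 = z^2/4 by ring] at hiq
    have hP : 0 < Real.exp (-z) * z^(2*μ+2) := by
      have := Real.rpow_pos_of_pos hz0 (2*μ+2)
      positivity
    apply mul_pos hP
    linarith [hiq]

end BesselProofAux

open BesselProofAux in
theorem besselI_ratio_lower_half (μ x y : ℝ) (hμ : -(1/2 : ℝ) < μ) (hx : 0 < x) (hxy : x < y) :
    (x / y) ^ (μ + 3) * Real.exp (y - x) < besselI μ y / besselI μ x := by
  have hμ' : (-1:ℝ) < μ := by linarith
  have hy : 0 < y := hx.trans hxy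
  have hGx := G_pos hμ' (show (0:ℝ) ≤ x^2/4 by positivity)
  have hGy := G_pos hμ' (show (0:ℝ) ≤ y^2/4 by positivity)
  have hIx0 : 0 < besselI μ x := by
    rw [besselI_eq hx]
    exact mul_pos (Real.rpow_pos_of_pos (by linarith) μ) hGx
  have hIy0 : 0 < besselI μ y := by
    rw [besselI_eq hy]
    exact mul_pos (Real.rpow_pos_of_pos (by linarith) μ) hGy
  have hH := strictMono_H hμ (Set.mem_Ioi.mpr hx) (Set.mem_Ioi.mpr hy) hxy
  simp only at hH
  have h2pos : (0:ℝ) < (2:ℝ)^μ := Real.rpow_pos_of_pos two_pos μ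
  have hrel : ∀ z : ℝ, 0 < z → z^(2*μ+3) * Real.exp (-z) * G μ (z^2/4)
      = (z^(μ+3) * Real.exp (-z) * besselI μ z) * 2^μ := by
    intro z hz
    rw [besselI_eq hz]
    have hd : ((z/2:ℝ))^μ = z^μ / (2:ℝ)^μ := Real.div_rpow hz.le (by norm_num : (0:ℝ) ≤ 2) μ
    have hzz : z^(μ+3) * z^μ = z^(2*μ+3) := by
      rw [← Real.rpow_add hz]; ring_nf
    rw [hd]
    field_simp
    rw [← hzz]
    ring
  rw [hrel x hx, hrel y hy] at hH
  have key3 : x^(μ+3) * Real.exp (-x) * besselI μ x < y^(μ+3) * Real.exp (-y) * besselI μ y :=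
    lt_of_mul_lt_mul_right hH h2pos.le
  have hgoal : (x / y) ^ (μ + 3) * Real.exp (y - x)
      = (x^(μ+3) * Real.exp (-x)) / (y^(μ+3) * Real.exp (-y)) := by
    rw [Real.div_rpow hx.le hy.le, show y - x = -x - -y by ring, Real.exp_sub,
      div_mul_div_comm]
  rw [hgoal, div_lt_div_iff₀ (mul_pos (Real.rpow_pos_of_pos hy _) (Real.exp_pos _)) hIx0]
  exact key3.trans_eq (by ring)
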